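/- The subspace V₁ spanned by X₁ = (1/√(-p)) ∂ₓ and X₅ = (x/√(-p)) ∂ₓ + 2√(-p) ∂ₚ is an abelian ideal of the 5-dimensional Lie algebra V spanned by X₁,...,X₅ on O = {p < 0}. -/

import Mathlib

open Real

/-- The half-plane `O = {(x,p) : p < 0}`. -/
def O : Set (ℝ × ℝ) := {z | z.2 < 0}

/-- Lie bracket of vector fields on `ℝ²`: `[V,W] = DW·V - DV·W`. -/
noncomputable def bracket (V W : ℝ × ℝ → ℝ × ℝ) (z : ℝ × ℝ) : ℝ × ℝ :=
  fderiv ℝ W z (V z) - fderiv ℝ V z (W z)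

noncomputable def X₁ : ℝ × ℝ → ℝ × ℝ := fun z => (1 / Real.sqrt (-z.2), 0)
def X₂ : ℝ × ℝ → ℝ × ℝ := fun _ => (1, 0)
def X₃ : ℝ × ℝ → ℝ × ℝ := fun z => (z.1, -z.2)
def X₄ : ℝ × ℝ → ℝ × ℝ := fun z => (z.1 ^ 2, -2 * z.1 * z.2)
noncomputable def X₅ : ℝ × ℝ → ℝ × ℝ :=
  fun z => (z.1 / Real.sqrt (-z.2), 2 * Real.sqrt (-z.2))

noncomputable def XF : Fin 5 → (ℝ × ℝ → ℝ × ℝ) := ![X₁, X₂, X₃, X₄, X₅]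

/- ### Auxiliary derivative lemmas -/

lemma sqrtneg_hasDerivAt {p : ℝ} (hp : p < 0) :
    HasDerivAt (fun q => Real.sqrt (-q)) (-(2 * Real.sqrt (-p))⁻¹) p := by
  have h := (Real.hasDerivAt_sqrt (x := -p) (by linarith)).comp p ((hasDerivAt_id p).neg)
  refine h.congr_deriv ?_
  simp [one_div]

lemma invsqrtneg_hasDerivAt {p : ℝ} (hp : p < 0) :
    HasDerivAt (fun q => (Real.sqrt (-q))⁻¹) ((2 * Real.sqrt (-p) ^ 3)⁻¹) p := by
  have hs : Real.sqrt (-p) ≠ 0 := (Real.sqrt_pos.mpr (by linarith)).ne'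
  have h := (sqrtneg_hasDerivAt hp).inv hs
  refine h.congr_deriv ?_
  field_simp

lemma hasFDerivAt_X1 {z : ℝ × ℝ} (hz : z.2 < 0) :
    HasFDerivAt X₁
      ((((2 * Real.sqrt (-z.2) ^ 3)⁻¹) • ContinuousLinearMap.snd ℝ ℝ ℝ).prod 0) z := by
  show HasFDerivAt (fun z : ℝ × ℝ => (1 / Real.sqrt (-z.2), (0:ℝ))) _ z
  simp only [one_div]
  exact HasFDerivAt.prodMk ((invsqrtneg_hasDerivAt hz).comp_hasFDerivAt z hasFDerivAt_snd)
    (hasFDerivAt_const 0 z)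

lemma fderiv_X2 (z : ℝ × ℝ) : fderiv ℝ X₂ z = 0 :=
  (hasFDerivAt_const ((1:ℝ), (0:ℝ)) z).fderiv

lemma hasFDerivAt_X3 (z : ℝ × ℝ) :
    HasFDerivAt X₃ ((ContinuousLinearMap.fst ℝ ℝ ℝ).prod
      (-(ContinuousLinearMap.snd ℝ ℝ ℝ))) z :=
  HasFDerivAt.prodMk hasFDerivAt_fst hasFDerivAt_snd.neg

lemma hasFDerivAt_X4 (z : ℝ × ℝ) :
    HasFDerivAt X₄
      (((2 * z.1) • ContinuousLinearMap.fst ℝ ℝ ℝ).prod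
        ((-2 * z.1) • ContinuousLinearMap.snd ℝ ℝ ℝ
          + (-2 * z.2) • ContinuousLinearMap.fst ℝ ℝ ℝ)) z := by
  show HasFDerivAt (fun z : ℝ × ℝ => (z.1 ^ 2, -2 * z.1 * z.2)) _ z
  simp only [sq]
  have h1 : HasFDerivAt (fun z : ℝ × ℝ => z.1 * z.1)
      ((2 * z.1) • ContinuousLinearMap.fst ℝ ℝ ℝ) z := by
    have := (hasFDerivAt_fst (p := z) (𝕜 := ℝ) (F := ℝ)).mul
      (hasFDerivAt_fst (p := z) (𝕜 := ℝ) (F := ℝ))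
    refine this.congr_fderiv ?_
    refine ContinuousLinearMap.ext fun v => ?_
    simp
    ring
  have h2 : HasFDerivAt (fun z : ℝ × ℝ => -2 * z.1 * z.2)
      ((-2 * z.1) • ContinuousLinearMap.snd ℝ ℝ ℝ
        + (-2 * z.2) • ContinuousLinearMap.fst ℝ ℝ ℝ) z := by
    have := ((hasFDerivAt_fst (p := z) (𝕜 := ℝ) (F := ℝ)).const_mul (-2)).mul
      (hasFDerivAt_snd (p := z) (𝕜 := ℝ) (E := ℝ))
    refine this.congr_fderiv ?_
    refine ContinuousLinearMap.ext fun v => ?_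
    simp
    ring
  exact HasFDerivAt.prodMk h1 h2

lemma hasFDerivAt_X5 {z : ℝ × ℝ} (hz : z.2 < 0) :
    HasFDerivAt X₅
      (((z.1 • (((2 * Real.sqrt (-z.2) ^ 3)⁻¹) • ContinuousLinearMap.snd ℝ ℝ ℝ)
          + (Real.sqrt (-z.2))⁻¹ • ContinuousLinearMap.fst ℝ ℝ ℝ)).prod
        ((2 * -(2 * Real.sqrt (-z.2))⁻¹) • ContinuousLinearMap.snd ℝ ℝ ℝ)) z := by
  show HasFDerivAt (fun z : ℝ × ℝ => (z.1 / Real.sqrt (-z.2), 2 * Real.sqrt (-z.2))) _ z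
  simp only [div_eq_mul_inv]
  exact HasFDerivAt.prodMk (hasFDerivAt_fst.mul
      ((invsqrtneg_hasDerivAt hz).comp_hasFDerivAt z hasFDerivAt_snd))
    (((sqrtneg_hasDerivAt hz).const_mul 2).comp_hasFDerivAt z hasFDerivAt_snd)

/- ### Bracket computations -/

lemma bracket_self (V : ℝ × ℝ → ℝ × ℝ) (z : ℝ × ℝ) : bracket V V z = 0 := sub_self _

lemma bracket_antisymm (V W : ℝ × ℝ → ℝ × ℝ) (z : ℝ × ℝ) :
    bracket W V z = -bracket V W z := by
  simp [bracket, neg_sub]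

lemma br15 {z : ℝ × ℝ} (hz : z.2 < 0) : bracket X₁ X₅ z = 0 := by
  have hs : Real.sqrt (-z.2) ≠ 0 := (Real.sqrt_pos.mpr (by linarith)).ne'
  have hs2 : Real.sqrt (-z.2) ^ 2 = -z.2 := Real.sq_sqrt (by linarith)
  rw [bracket, (hasFDerivAt_X1 hz).fderiv, (hasFDerivAt_X5 hz).fderiv]
  simp only [X₁, X₅, ContinuousLinearMap.prod_apply, ContinuousLinearMap.add_apply,
    ContinuousLinearMap.smul_apply, ContinuousLinearMap.coe_fst',
    ContinuousLinearMap.coe_snd', ContinuousLinearMap.zero_apply, smul_eq_mul,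
    Prod.mk_sub_mk, Prod.mk.injEq, Prod.ext_iff, Prod.fst_zero, Prod.snd_zero]
  set s := Real.sqrt (-z.2)
  constructor <;> field_simp <;> ring_nf

lemma br21 {z : ℝ × ℝ} (hz : z.2 < 0) : bracket X₂ X₁ z = 0 := by
  rw [bracket, (hasFDerivAt_X1 hz).fderiv, fderiv_X2]
  simp [X₂, Prod.ext_iff]

lemma br25 {z : ℝ × ℝ} (hz : z.2 < 0) : bracket X₂ X₅ z = X₁ z := by
  rw [bracket, (hasFDerivAt_X5 hz).fderiv, fderiv_X2]
  simp [X₁, X₂, Prod.ext_iff, one_div]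

lemma br31 {z : ℝ × ℝ} (hz : z.2 < 0) :
    bracket X₃ X₁ z = (-(1/2) : ℝ) • X₁ z := by
  have hs : Real.sqrt (-z.2) ≠ 0 := (Real.sqrt_pos.mpr (by linarith)).ne'
  have hs2 : Real.sqrt (-z.2) ^ 2 = -z.2 := Real.sq_sqrt (by linarith)
  rw [bracket, (hasFDerivAt_X1 hz).fderiv, (hasFDerivAt_X3 z).fderiv]
  simp only [X₁, X₃, ContinuousLinearMap.prod_apply, ContinuousLinearMap.smul_apply,
    ContinuousLinearMap.coe_fst', ContinuousLinearMap.coe_snd',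
    ContinuousLinearMap.neg_apply, ContinuousLinearMap.zero_apply, smul_eq_mul,
    Prod.mk_sub_mk, Prod.smul_mk, Prod.mk.injEq, Prod.ext_iff]
  set s := Real.sqrt (-z.2)
  rw [show z.2 = -s ^ 2 by linarith]
  constructor <;> field_simp <;> ring

lemma br35 {z : ℝ × ℝ} (hz : z.2 < 0) :
    bracket X₃ X₅ z = ((1/2) : ℝ) • X₅ z := by
  have hs : Real.sqrt (-z.2) ≠ 0 := (Real.sqrt_pos.mpr (by linarith)).ne'
  have hs2 : Real.sqrt (-z.2) ^ 2 = -z.2 := Real.sq_sqrt (by linarith)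
  rw [bracket, (hasFDerivAt_X5 hz).fderiv, (hasFDerivAt_X3 z).fderiv]
  simp only [X₃, X₅, ContinuousLinearMap.prod_apply, ContinuousLinearMap.add_apply,
    ContinuousLinearMap.smul_apply, ContinuousLinearMap.coe_fst',
    ContinuousLinearMap.coe_snd', ContinuousLinearMap.neg_apply, smul_eq_mul,
    Prod.mk_sub_mk, Prod.smul_mk, Prod.mk.injEq, Prod.ext_iff]
  set s := Real.sqrt (-z.2)
  rw [show z.2 = -s ^ 2 by linarith]
  constructor <;> field_simp <;> ring

lemma br41 {z : ℝ × ℝ} (hz : z.2 < 0) :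
    bracket X₄ X₁ z = (-1 : ℝ) • X₅ z := by
  have hs : Real.sqrt (-z.2) ≠ 0 := (Real.sqrt_pos.mpr (by linarith)).ne'
  have hs2 : Real.sqrt (-z.2) ^ 2 = -z.2 := Real.sq_sqrt (by linarith)
  rw [bracket, (hasFDerivAt_X1 hz).fderiv, (hasFDerivAt_X4 z).fderiv]
  simp only [X₁, X₄, X₅, ContinuousLinearMap.prod_apply, ContinuousLinearMap.add_apply,
    ContinuousLinearMap.smul_apply, ContinuousLinearMap.coe_fst',
    ContinuousLinearMap.coe_snd', ContinuousLinearMap.zero_apply, smul_eq_mul,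
    Prod.mk_sub_mk, Prod.smul_mk, Prod.mk.injEq, Prod.ext_iff]
  set s := Real.sqrt (-z.2)
  rw [show z.2 = -s ^ 2 by linarith]
  constructor <;> field_simp <;> ring

lemma br45 {z : ℝ × ℝ} (hz : z.2 < 0) : bracket X₄ X₅ z = 0 := by
  have hs : Real.sqrt (-z.2) ≠ 0 := (Real.sqrt_pos.mpr (by linarith)).ne'
  have hs2 : Real.sqrt (-z.2) ^ 2 = -z.2 := Real.sq_sqrt (by linarith)
  rw [bracket, (hasFDerivAt_X5 hz).fderiv, (hasFDerivAt_X4 z).fderiv]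
  simp only [X₄, X₅, ContinuousLinearMap.prod_apply, ContinuousLinearMap.add_apply,
    ContinuousLinearMap.smul_apply, ContinuousLinearMap.coe_fst',
    ContinuousLinearMap.coe_snd', smul_eq_mul, Prod.mk_sub_mk, Prod.mk.injEq,
    Prod.ext_iff, Prod.fst_zero, Prod.snd_zero]
  set s := Real.sqrt (-z.2)
  rw [show z.2 = -s ^ 2 by linarith]
  constructor <;> field_simp <;> ring

/-- `V₁ = span{X₁,X₅}` is an abelian ideal of the 5-dimensional
Lie algebra `V = span{X₁,…,X₅}` on `O = {p < 0}`. -/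
theorem V1_abelian_ideal :
    (∀ z ∈ O, bracket X₁ X₅ z = 0) ∧
    (∀ i : Fin 5, ∀ j : Fin 5, j = 0 ∨ j = 4 →
      ∃ a b : ℝ, ∀ z ∈ O, bracket (XF i) (XF j) z = a • X₁ z + b • X₅ z) := by
  constructor
  · exact fun z hz => br15 hz
  · have e0 : XF 0 = X₁ := rfl
    have e1 : XF 1 = X₂ := rfl
    have e2 : XF 2 = X₃ := rfl
    have e3 : XF 3 = X₄ := rfl
    have e4 : XF 4 = X₅ := rfl
    intro i j hj
    fin_cases i <;> rcases hj with rfl | rfl <;>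
      simp only [Fin.isValue, e0, e1, e2, e3, e4]
    · exact ⟨0, 0, fun z hz => by
        show bracket X₁ X₁ z = _; simp [bracket_self]⟩
    · exact ⟨0, 0, fun z hz => by
        show bracket X₁ X₅ z = _; simp [br15 hz]⟩
    · exact ⟨0, 0, fun z hz => by
        show bracket X₂ X₁ z = _; simp [br21 hz]⟩
    · exact ⟨1, 0, fun z hz => by
        show bracket X₂ X₅ z = _; simp [br25 hz]⟩
    · exact ⟨-(1/2), 0, fun z hz => by
        show bracket X₃ X₁ z = _; simp [br31 hz]⟩
    · exact ⟨0, 1/2, fun z hz => by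
        show bracket X₃ X₅ z = _; simp [br35 hz]⟩
    · exact ⟨0, -1, fun z hz => by
        show bracket X₄ X₁ z = _; simp [br41 hz]⟩
    · exact ⟨0, 0, fun z hz => by
        show bracket X₄ X₅ z = _; simp [br45 hz]⟩
    · exact ⟨0, 0, fun z hz => by
        show bracket X₅ X₁ z = _; simp [bracket_antisymm X₁ X₅ z, br15 hz]⟩
    · exact ⟨0, 0, fun z hz => by
        show bracket X₅ X₅ z = _; simp [bracket_self]⟩
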